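/- For any nonzero integer n, the 1-forms ω₁ = cos(nθ₁)dθ₂ + sin(nθ₁)dθ₃ and ω₂ = −sin(nθ₁)dθ₂ + cos(nθ₁)dθ₃ on the 3-torus satisfy: for all λ₁, λ₂ with λ₁² + λ₂² = 1, setting ω = λ₁ω₁ + λ₂ω₂, one has ω ∧ dω = −n dθ₁ ∧ dθ₂ ∧ dθ₃. In particular (ω₁, ω₂) generates a taut contact circle on 𝕋³. -/

import Mathlib

open scoped BigOperators

noncomputable section

abbrev E3 : Type := Fin 3 → ℝ

/-- `ω₁ = cos(nθ₁)dθ₂ + sin(nθ₁)dθ₃` on the 3-torus (angular coordinates). -/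
def ω₁ (n : ℤ) (θ v : E3) : ℝ :=
  Real.cos (n * θ 0) * v 1 + Real.sin (n * θ 0) * v 2

/-- `ω₂ = −sin(nθ₁)dθ₂ + cos(nθ₁)dθ₃` on the 3-torus (angular coordinates). -/
def ω₂ (n : ℤ) (θ v : E3) : ℝ :=
  -Real.sin (n * θ 0) * v 1 + Real.cos (n * θ 0) * v 2

/-- Exterior derivative of a 1-form, evaluated at `x` on `u, v`. -/
def extd (ω : E3 → E3 → ℝ) (x u v : E3) : ℝ :=
  fderiv ℝ (fun y => ω y v) x u - fderiv ℝ (fun y => ω y u) x v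

/-- Evaluation of the 3-form `a ∧ b` (degrees 1, 2) on three vectors. -/
def wedge12 (a : E3 → ℝ) (b : E3 → E3 → ℝ) (v : Fin 3 → E3) : ℝ :=
  (1 / 2 : ℝ) * ∑ σ : Equiv.Perm (Fin 3),
    ((Equiv.Perm.sign σ : ℤ) : ℝ) * a (v (σ 0)) * b (v (σ 1)) (v (σ 2))

lemma fd_apply (n P Q : ℝ) (θ u : E3) :
    fderiv ℝ (fun y : E3 => Real.cos (n * y 0) * P + Real.sin (n * y 0) * Q) θ u
      = n * (-Real.sin (n * θ 0) * P + Real.cos (n * θ 0) * Q) * u 0 := by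
  have h0 : HasFDerivAt (fun y : E3 => n * y 0)
      ((n : ℝ) • ContinuousLinearMap.proj (0 : Fin 3)) θ :=
    (ContinuousLinearMap.proj (R := ℝ) (φ := fun _ : Fin 3 => ℝ) (0 : Fin 3)).hasFDerivAt.const_mul n
  have hc := ((Real.hasDerivAt_cos (n * θ 0)).comp_hasFDerivAt θ h0).mul_const P
  have hs := ((Real.hasDerivAt_sin (n * θ 0)).comp_hasFDerivAt θ h0).mul_const Q
  have h := (hc.add hs).fderiv
  simp only [Function.comp, Pi.add_def] at h
  rw [h]
  simp [Function.comp]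
  ring

set_option maxHeartbeats 1000000 in
/-- For any nonzero integer `n`, every normalized combination
`ω = λ₁ω₁ + λ₂ω₂` of `ω₁ = cos(nθ₁)dθ₂ + sin(nθ₁)dθ₃` and
`ω₂ = −sin(nθ₁)dθ₂ + cos(nθ₁)dθ₃` on 𝕋³ satisfies
`ω ∧ dω = −n dθ₁ ∧ dθ₂ ∧ dθ₃`; in particular `(ω₁, ω₂)` generates a taut
contact circle on 𝕋³. -/
theorem stmt4 (n : ℤ) (hn : n ≠ 0) (l₁ l₂ : ℝ) (hl : l₁ ^ 2 + l₂ ^ 2 = 1)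
    (θ : E3) (v : Fin 3 → E3) :
    wedge12 (fun w => l₁ * ω₁ n θ w + l₂ * ω₂ n θ w)
      (extd (fun y w => l₁ * ω₁ n y w + l₂ * ω₂ n y w) θ) v
    = -(n : ℝ) * Matrix.det (Matrix.of fun i j : Fin 3 => v i j) := by
  set c := Real.cos ((n : ℝ) * θ 0) with hc
  set s := Real.sin ((n : ℝ) * θ 0) with hs
  set a := l₁ * c - l₂ * s with ha
  set b := l₁ * s + l₂ * c with hb
  have key : a ^ 2 + b ^ 2 = 1 := by
    have pyth : s ^ 2 + c ^ 2 = 1 := Real.sin_sq_add_cos_sq _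
    rw [ha, hb]; nlinarith [pyth, hl]
  have hL : ∀ w : E3, l₁ * ω₁ n θ w + l₂ * ω₂ n θ w = a * w 1 + b * w 2 := by
    intro w; simp only [ω₁, ω₂, ha, hb, hc, hs]; ring
  have hE : ∀ u w : E3,
      extd (fun y w => l₁ * ω₁ n y w + l₂ * ω₂ n y w) θ u w
        = (n : ℝ) * ((-b * w 1 + a * w 2) * u 0 - (-b * u 1 + a * u 2) * w 0) := by
    intro u w
    have hfun : ∀ z : E3, (fun y => l₁ * ω₁ n y z + l₂ * ω₂ n y z)
        = fun y : E3 => Real.cos ((n : ℝ) * y 0) * (l₁ * z 1 + l₂ * z 2)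
            + Real.sin ((n : ℝ) * y 0) * (l₁ * z 2 - l₂ * z 1) := by
      intro z; funext y; simp only [ω₁, ω₂]; ring
    rw [extd, hfun w, hfun u, fd_apply, fd_apply, ha, hb, ← hc, ← hs]
    ring
  rw [wedge12, Matrix.det_fin_three]
  rw [show (Finset.univ : Finset (Equiv.Perm (Fin 3))) =
      {Equiv.refl _, Equiv.swap 0 1, Equiv.swap 0 2, Equiv.swap 1 2,
        Equiv.swap 0 1 * Equiv.swap 1 2, Equiv.swap 1 2 * Equiv.swap 0 1} from by decide]
  rw [Finset.sum_insert (by decide), Finset.sum_insert (by decide),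
    Finset.sum_insert (by decide), Finset.sum_insert (by decide),
    Finset.sum_insert (by decide), Finset.sum_singleton]
  simp only [hL, hE, Matrix.of_apply,
    show ∀ i : Fin 3, (Equiv.refl (Fin 3)) i = i from fun _ => rfl,
    show (Equiv.swap (0:Fin 3) 1) 0 = 1 from by decide,
    show (Equiv.swap (0:Fin 3) 1) 1 = 0 from by decide,
    show (Equiv.swap (0:Fin 3) 1) 2 = 2 from by decide,
    show (Equiv.swap (0:Fin 3) 2) 0 = 2 from by decide,
    show (Equiv.swap (0:Fin 3) 2) 1 = 1 from by decide,
    show (Equiv.swap (0:Fin 3) 2) 2 = 0 from by decide,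
    show (Equiv.swap (1:Fin 3) 2) 0 = 0 from by decide,
    show (Equiv.swap (1:Fin 3) 2) 1 = 2 from by decide,
    show (Equiv.swap (1:Fin 3) 2) 2 = 1 from by decide,
    show (Equiv.swap (0:Fin 3) 1 * Equiv.swap 1 2 : Equiv.Perm (Fin 3)) 0 = 1 from by decide,
    show (Equiv.swap (0:Fin 3) 1 * Equiv.swap 1 2 : Equiv.Perm (Fin 3)) 1 = 2 from by decide,
    show (Equiv.swap (0:Fin 3) 1 * Equiv.swap 1 2 : Equiv.Perm (Fin 3)) 2 = 0 from by decide,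
    show (Equiv.swap (1:Fin 3) 2 * Equiv.swap 0 1 : Equiv.Perm (Fin 3)) 0 = 2 from by decide,
    show (Equiv.swap (1:Fin 3) 2 * Equiv.swap 0 1 : Equiv.Perm (Fin 3)) 1 = 0 from by decide,
    show (Equiv.swap (1:Fin 3) 2 * Equiv.swap 0 1 : Equiv.Perm (Fin 3)) 2 = 1 from by decide,
    show ((Equiv.Perm.sign (Equiv.refl (Fin 3)) : ℤ) : ℝ) = 1 from by norm_num,
    show ((Equiv.Perm.sign (Equiv.swap (0:Fin 3) 1) : ℤ) : ℝ) = -1 from by rw [show (Equiv.Perm.sign (Equiv.swap _ _)) = -1 from by decide]; norm_num,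
    show ((Equiv.Perm.sign (Equiv.swap (0:Fin 3) 2) : ℤ) : ℝ) = -1 from by rw [show (Equiv.Perm.sign (Equiv.swap _ _)) = -1 from by decide]; norm_num,
    show ((Equiv.Perm.sign (Equiv.swap (1:Fin 3) 2) : ℤ) : ℝ) = -1 from by rw [show (Equiv.Perm.sign (Equiv.swap _ _)) = -1 from by decide]; norm_num,
    show ((Equiv.Perm.sign (Equiv.swap (0:Fin 3) 1 * Equiv.swap 1 2) : ℤ) : ℝ) = 1 from by
      rw [show (Equiv.Perm.sign (_ * _ : Equiv.Perm (Fin 3))) = 1 from by decide]; norm_num,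
    show ((Equiv.Perm.sign (Equiv.swap (1:Fin 3) 2 * Equiv.swap 0 1) : ℤ) : ℝ) = 1 from by
      rw [show (Equiv.Perm.sign (_ * _ : Equiv.Perm (Fin 3))) = 1 from by decide]; norm_num]
  linear_combination (-(n : ℝ) * (v 0 0 * (v 1 1 * v 2 2 - v 1 2 * v 2 1)
    - v 0 1 * (v 1 0 * v 2 2 - v 1 2 * v 2 0)
    + v 0 2 * (v 1 0 * v 2 1 - v 1 1 * v 2 0))) * key

end
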